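/- In any tree T rooted at a vertex v, the number of subtrees of T containing v is at least |V(T)|, with equality if and only if T is a path and v is one of its endpoints. -/

import Mathlib

open SimpleGraph

/-- The number of connected induced subgraphs of `G`, i.e. the number of nonempty
vertex subsets of `G` inducing a connected subgraph. -/
noncomputable def numConn {V : Type*} (G : SimpleGraph V) : ℕ :=
  Nat.card {s : Finset V // (G.induce (s : Set V)).Connected}

/-- The number of `k`-vertex connected induced subgraphs of `G`. -/
noncomputable def numConnK {V : Type*} (G : SimpleGraph V) (k : ℕ) : ℕ :=
  Nat.card {s : Finset V // s.card = k ∧ (G.induce (s : Set V)).Connected}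

/-- The number of connected induced subgraphs of `G` containing the vertex `v`. -/
noncomputable def numConnAt {V : Type*} (G : SimpleGraph V) (v : V) : ℕ :=
  Nat.card {s : Finset V // v ∈ s ∧ (G.induce (s : Set V)).Connected}

/-- The star graph on `Fin n`, with center `0`. -/
def starGraph (n : ℕ) : SimpleGraph (Fin n) :=
  SimpleGraph.fromRel (fun i _ => (i : ℕ) = 0)

/-- The tadpole graph `G_{p,q}` (for `p ≥ 3`): the path `0 - 1 - ⋯ - (p+q-1)` together with
the edge `{0, p-1}` closing a cycle of length `p`; the tail of length `q` hangs at `p-1`. -/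
def tadpole (p q : ℕ) : SimpleGraph (Fin (p + q)) :=
  SimpleGraph.fromRel (fun i j => (i : ℕ) + 1 = j ∨ ((i : ℕ) = 0 ∧ (j : ℕ) = p - 1))

/-- The banner graph `B_n` (for `n ≥ 4`): a `4`-cycle `0-1-2-3-0` with `n - 4` pendant
vertices attached to vertex `0`. -/
def banner (n : ℕ) : SimpleGraph (Fin n) :=
  SimpleGraph.fromRel (fun i j =>
    ((i : ℕ) + 1 = j ∧ (j : ℕ) ≤ 3) ∨ ((i : ℕ) = 0 ∧ (j : ℕ) = 3) ∨ ((i : ℕ) = 0 ∧ 4 ≤ (j : ℕ)))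

/-- The graph `Q_n` (for `n > 2`): the star on `n` vertices with center `0`, plus an edge
joining the two leaves `1` and `2`. -/
def Qgraph (n : ℕ) : SimpleGraph (Fin n) :=
  SimpleGraph.fromRel (fun i j => (i : ℕ) = 0 ∨ ((i : ℕ) = 1 ∧ (j : ℕ) = 2))

section Aux
open Walk
variable {V : Type*}

/-- The induced subgraph on the support of a walk is connected. -/
lemma aux_induce_support_connected {G : SimpleGraph V} {u v : V} (p : G.Walk u v) :
    (G.induce {x | x ∈ p.support}).Connected := by
  rw [induce_eq_coe_induce_top]
  have : ((⊤ : G.Subgraph).induce {x | x ∈ p.support}).Connected := by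
    refine p.toSubgraph_connected.mono ?_ ?_
    · constructor
      · rw [verts_toSubgraph]; exact fun x hx => hx
      · intro a b hab
        refine ⟨?_, ?_, p.toSubgraph.adj_sub hab⟩
        · simpa [Walk.mem_verts_toSubgraph] using p.toSubgraph.edge_vert hab
        · simpa [Walk.mem_verts_toSubgraph] using p.toSubgraph.edge_vert hab.symm
    · simp [verts_toSubgraph]
  exact this.coe

lemma aux_support_getElem {G : SimpleGraph V} :
    ∀ {u v : V} (p : G.Walk u v) (i : ℕ) (h : i < p.support.length),
      p.support[i] = p.getVert i := by
  intro u v p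
  induction p with
  | nil => intro i h; simp at h; subst h; simp [Walk.getVert]
  | cons hadj q ih =>
    intro i h
    cases i with
    | zero => simp [Walk.getVert]
    | succ j =>
      simp only [Walk.support_cons, List.getElem_cons_succ, Walk.getVert_cons_succ]
      exact ih j (by simpa [Walk.support_cons] using h)

lemma aux_mem_edges {G : SimpleGraph V} {a b : V} :
    ∀ {u v : V} (p : G.Walk u v), s(a, b) ∈ p.edges →
      ∃ i < p.length, (p.getVert i = a ∧ p.getVert (i+1) = b) ∨
        (p.getVert i = b ∧ p.getVert (i+1) = a) := by
  intro u v p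
  induction p with
  | nil => simp
  | cons hadj q ih =>
    intro hmem
    rw [Walk.edges_cons, List.mem_cons] at hmem
    rcases hmem with hmem | hmem
    · refine ⟨0, by simp, ?_⟩
      rw [Sym2.eq_iff] at hmem
      rcases hmem with ⟨h1, h2⟩ | ⟨h1, h2⟩
      · left; constructor
        · simp [Walk.getVert_zero, h1]
        · rw [Walk.getVert_cons_succ, Walk.getVert_zero, h2]
      · right; constructor
        · simp [Walk.getVert_zero, h2]
        · rw [Walk.getVert_cons_succ, Walk.getVert_zero, h1]
    · obtain ⟨i, hi, h⟩ := ih hmem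
      exact ⟨i + 1, by simpa using Nat.succ_lt_succ hi, by
        simpa [Walk.getVert_cons_succ] using h⟩

lemma aux_path_walk_down {n : ℕ} {s : Set (Fin n)} :
    ∀ {a b : ↥s} (_ : ((pathGraph n).induce s).Walk a b) (k : ℕ),
      ((b : Fin n) : ℕ) ≤ k → k ≤ ((a : Fin n) : ℕ) → ∃ x : Fin n, x ∈ s ∧ (x : ℕ) = k := by
  intro a b w
  induction w with
  | @nil u => intro k h1 h2; exact ⟨u, u.2, le_antisymm h1 h2⟩
  | @cons x y z h q ih =>
    intro k h1 h2
    by_cases hk : k ≤ ((y : Fin n) : ℕ)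
    · exact ih k h1 hk
    · have hadj : (pathGraph n).Adj x y := h
      rw [pathGraph_adj] at hadj
      have : ((x : Fin n) : ℕ) = k := by omega
      exact ⟨x, x.2, this⟩

lemma aux_Iic_connected {n : ℕ} (k : Fin n) :
    ((pathGraph n).induce ((Finset.Iic k : Finset (Fin n)) : Set (Fin n))).Connected := by
  rw [connected_iff_exists_forall_reachable]
  have h0 : (⟨0, k.pos⟩ : Fin n) ∈ ((Finset.Iic k : Finset (Fin n)) : Set (Fin n)) := by
    simp [Fin.le_def]
  refine ⟨⟨⟨0, k.pos⟩, h0⟩, ?_⟩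
  rintro ⟨w, hw⟩
  suffices H : ∀ (m : ℕ) (x : ↥((Finset.Iic k : Finset (Fin n)) : Set (Fin n))),
      ((x : Fin n) : ℕ) = m →
      ((pathGraph n).induce ((Finset.Iic k : Finset (Fin n)) : Set (Fin n))).Reachable
        ⟨⟨0, k.pos⟩, h0⟩ x by
    exact H (w : ℕ) ⟨w, hw⟩ rfl
  intro m
  induction m with
  | zero =>
    intro x hx
    have : (⟨⟨0, k.pos⟩, h0⟩ : ↥((Finset.Iic k : Finset (Fin n)) : Set (Fin n))) = x :=
      Subtype.ext (Fin.ext hx.symm)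
    rw [this]
  | succ m ih =>
    intro x hx
    have hmn : m < n := by omega
    have hy : (⟨m, hmn⟩ : Fin n) ∈ ((Finset.Iic k : Finset (Fin n)) : Set (Fin n)) := by
      have hxk : (x : Fin n) ≤ k := by simpa using x.2
      simp only [Finset.coe_Iic, Set.mem_Iic, Fin.le_def]
      rw [Fin.le_def] at hxk
      omega
    have hadj : ((pathGraph n).induce ((Finset.Iic k : Finset (Fin n)) : Set (Fin n))).Adj
        ⟨⟨m, hmn⟩, hy⟩ x := by
      simp only [comap_adj, Function.Embedding.coe_subtype, pathGraph_adj]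
      left; simpa using hx.symm
    exact (ih ⟨⟨m, hmn⟩, hy⟩ rfl).trans hadj.reachable

lemma aux_count_path {n : ℕ} (hn : 0 < n) :
    Nat.card {s : Finset (Fin n) //
      (⟨0, hn⟩ : Fin n) ∈ s ∧ ((pathGraph n).induce (s : Set (Fin n))).Connected} = n := by
  have e : {s : Finset (Fin n) //
      (⟨0, hn⟩ : Fin n) ∈ s ∧ ((pathGraph n).induce (s : Set (Fin n))).Connected} ≃ Fin n := by
    refine
      { toFun := fun s => s.1.max' ⟨_, s.2.1⟩
        invFun := fun k => ⟨Finset.Iic k, by simp [Fin.le_def], by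
          simpa using aux_Iic_connected k⟩
        left_inv := ?_
        right_inv := ?_ }
    · rintro ⟨s, h0, hconn⟩
      ext1
      ext x
      simp only [Finset.mem_Iic]
      constructor
      · intro hx
        have hmax : s.max' ⟨_, h0⟩ ∈ (s : Set (Fin n)) := by
          exact_mod_cast s.max'_mem ⟨_, h0⟩
        have h0' : (⟨0, hn⟩ : Fin n) ∈ (s : Set (Fin n)) := by exact_mod_cast h0
        obtain ⟨w⟩ := hconn.preconnected ⟨_, hmax⟩ ⟨_, h0'⟩
        obtain ⟨y, hy, hyx⟩ := aux_path_walk_down w (x : ℕ) (by simp) (by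
          rw [Fin.le_def] at hx; simpa using hx)
        have : y = x := Fin.ext hyx
        rw [← this]; exact_mod_cast hy
      · intro hx
        exact s.le_max' x hx
    · intro k
      apply le_antisymm
      · have := Finset.max'_mem (Finset.Iic k) ⟨k, Finset.mem_Iic.mpr le_rfl⟩
        simpa using this
      · exact Finset.le_max' _ k (Finset.mem_Iic.mpr le_rfl)
  rw [Nat.card_congr e, Nat.card_eq_fintype_card, Fintype.card_fin]

lemma aux_numConnAt_iso {V W : Type*} (G : SimpleGraph V) (H : SimpleGraph W) (φ : G ≃g H)
    (v : V) :
    Nat.card {s : Finset V // v ∈ s ∧ (G.induce (s : Set V)).Connected} =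
      Nat.card {s : Finset W // φ v ∈ s ∧ (H.induce (s : Set W)).Connected} := by
  refine Nat.card_congr (Equiv.subtypeEquiv (Equiv.finsetCongr φ.toEquiv) ?_)
  intro s
  have hmem : v ∈ s ↔ φ v ∈ s.map φ.toEquiv.toEmbedding := by
    exact (Finset.mem_map' _).symm
  have hiso : G.induce (s : Set V) ≃g H.induce ((s.map φ.toEquiv.toEmbedding : Finset W) : Set W) := by
    refine { toEquiv := (φ.toEquiv.subtypeEquiv ?_), map_rel_iff' := ?_ }
    · intro a; simp
    · intro a b
      simp only [Equiv.subtypeEquiv_apply, comap_adj, Function.Embedding.coe_subtype]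
      exact φ.map_adj_iff
  rw [hmem, hiso.connected_iff]
  rfl

end Aux

private theorem stmt9_aux {V : Type*} [Fintype V] (T : SimpleGraph V) (hT : T.IsTree) (v : V) :
    Fintype.card V ≤ Nat.card {s : Finset V // v ∈ s ∧ (T.induce (s : Set V)).Connected} ∧
      (Nat.card {s : Finset V // v ∈ s ∧ (T.induce (s : Set V)).Connected} = Fintype.card V ↔
        ∃ φ : T ≃g pathGraph (Fintype.card V), (φ v : ℕ) = 0) := by
  classical
  choose p hp hu using fun u => hT.existsUnique_path v u
  set Sub := {s : Finset V // v ∈ s ∧ (T.induce (s : Set V)).Connected} with hSub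
  have hn : 0 < Fintype.card V := Fintype.card_pos_iff.mpr ⟨v⟩
  set f : V → Sub := fun u =>
    ⟨(p u).support.toFinset, by simp [Walk.start_mem_support], by
      rw [List.coe_toFinset]; exact aux_induce_support_connected (p u)⟩ with hf
  have hinj : Function.Injective f := by
    intro a b hab
    have hsup : (p a).support.toFinset = (p b).support.toFinset := congrArg Subtype.val hab
    have hb : b ∈ (p a).support := by
      have h := Walk.end_mem_support (p b)
      rwa [← List.mem_toFinset, ← hsup, List.mem_toFinset] at h
    have h1 : (p a).takeUntil b hb = p b := hu b _ ((hp a).takeUntil hb)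
    have ha : a ∈ (p b).support := by
      have h := Walk.end_mem_support (p a)
      rwa [← List.mem_toFinset, hsup, List.mem_toFinset] at h
    have h2 : (p b).takeUntil a ha = p a := hu a _ ((hp b).takeUntil ha)
    have l1 : ((p a).takeUntil b hb).length ≤ (p a).length := Walk.length_takeUntil_le _ hb
    have l2 : ((p b).takeUntil a ha).length ≤ (p b).length := Walk.length_takeUntil_le _ ha
    rw [h1] at l1; rw [h2] at l2
    have hsum : ((p a).takeUntil b hb).length + ((p a).dropUntil b hb).length
        = (p a).length := by
      rw [← Walk.length_append, (p a).take_spec hb]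
    have hlen1 : ((p a).takeUntil b hb).length = (p b).length := by rw [h1]
    have hdrop : ((p a).dropUntil b hb).length = 0 := by omega
    exact (Walk.eq_of_length_eq_zero hdrop).symm
  constructor
  · calc Fintype.card V = Nat.card V := Nat.card_eq_fintype_card.symm
      _ ≤ Nat.card Sub := Nat.card_le_card_of_injective f hinj
  constructor
  · intro heq
    have hbij : Function.Bijective f := (Nat.bijective_iff_injective_and_card f).mpr
      ⟨hinj, by rw [Nat.card_eq_fintype_card, ← heq]⟩
    have hconnuniv : (T.induce ((Finset.univ : Finset V) : Set V)).Connected := by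
      rw [Finset.coe_univ]
      exact ((induceUnivIso T).connected_iff).mpr hT.isConnected
    obtain ⟨u, huu⟩ := hbij.2 ⟨Finset.univ, Finset.mem_univ v, hconnuniv⟩
    have hallfin : (p u).support.toFinset = Finset.univ := congrArg Subtype.val huu
    have hall : ∀ x, x ∈ (p u).support := by
      intro x
      rw [← List.mem_toFinset, hallfin]; exact Finset.mem_univ x
    set q := p u with hqdef
    have hnd : q.support.Nodup := (hp u).support_nodup
    have hlen : q.support.length = Fintype.card V := by
      rw [← List.toFinset_card_of_nodup hnd, hallfin, Finset.card_univ]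
    have hql : q.length + 1 = Fintype.card V := by
      rw [← hlen, Walk.length_support]
    set g : V → Fin (Fintype.card V) := fun x =>
      ⟨q.support.idxOf x, hlen ▸ List.idxOf_lt_length_iff.2 (hall x)⟩ with hg
    have key1 : ∀ (i : ℕ) (h : i < q.support.length), q.support.idxOf q.support[i] = i :=
      fun i h => List.Nodup.idxOf_getElem hnd i h
    have key1' : ∀ (i : ℕ) (h : i < q.support.length), q.support.idxOf (q.getVert i) = i :=
      fun i h => by rw [← aux_support_getElem q i h]; exact key1 i h
    have key2 : ∀ x, q.getVert (q.support.idxOf x) = x := by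
      intro x
      rw [← aux_support_getElem q _ (List.idxOf_lt_length_iff.2 (hall x))]
      exact List.getElem_idxOf _
    have ginj : Function.Injective g := by
      intro a b hab
      have : q.support.idxOf a = q.support.idxOf b := congrArg Fin.val hab
      exact (List.idxOf_inj (hall a)).mp this
    have gbij : Function.Bijective g :=
      (Fintype.bijective_iff_injective_and_card g).mpr ⟨ginj, by simp⟩
    have hsubE : q.edges.toFinset ⊆ T.edgeFinset := by
      intro e he
      rw [List.mem_toFinset] at he
      rw [mem_edgeFinset]; exact q.edges_subset_edgeSet he
    have hqE : q.edges.toFinset.card = Fintype.card V - 1 := by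
      rw [List.toFinset_card_of_nodup (hp u).edges_nodup, Walk.length_edges, ← hql,
        Nat.add_sub_cancel]
    have hedges : q.edges.toFinset = T.edgeFinset :=
      Finset.eq_of_subset_of_card_le hsubE (by
        have h := hT.card_edgeFinset
        omega)
    have hadj_iff : ∀ a b : V, (pathGraph (Fintype.card V)).Adj (g a) (g b) ↔ T.Adj a b := by
      intro a b
      constructor
      · intro hab
        rw [pathGraph_adj] at hab
        rcases hab with hab | hab
        · simp only [hg] at hab
          have hilt : q.support.idxOf a < q.length := by
            have := List.idxOf_lt_length_iff.2 (hall b)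
            rw [hlen] at this; omega
          have := q.adj_getVert_succ hilt
          rw [key2 a, show q.support.idxOf a + 1 = q.support.idxOf b from hab, key2 b]
            at this
          exact this
        · simp only [hg] at hab
          have hilt : q.support.idxOf b < q.length := by
            have := List.idxOf_lt_length_iff.2 (hall a)
            rw [hlen] at this; omega
          have := q.adj_getVert_succ hilt
          rw [key2 b, show q.support.idxOf b + 1 = q.support.idxOf a from hab, key2 a]
            at this
          exact this.symm
      · intro hab
        have hmem : s(a, b) ∈ q.edges := by
          rw [← List.mem_toFinset, hedges, mem_edgeFinset]; exact hab
        obtain ⟨i, hi, hcase⟩ := aux_mem_edges q hmem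
        rw [pathGraph_adj]
        have hi1 : i < q.support.length := by rw [Walk.length_support]; omega
        have hi2 : i + 1 < q.support.length := by rw [Walk.length_support]; omega
        rcases hcase with ⟨h1, h2⟩ | ⟨h1, h2⟩
        · left
          simp only [hg]
          rw [← h1, ← h2, key1' i hi1, key1' (i+1) hi2]
        · right
          simp only [hg]
          rw [← h1, ← h2, key1' i hi1, key1' (i+1) hi2]
    refine ⟨{ toEquiv := Equiv.ofBijective g gbij, map_rel_iff' := fun {a b} => hadj_iff a b }, ?_⟩
    show (q.support.idxOf v : ℕ) = 0
    have h0 : (0 : ℕ) < q.support.length := by rw [hlen]; omega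
    have : q.support.idxOf (q.getVert 0) = 0 := key1' 0 h0
    rwa [Walk.getVert_zero] at this
  · rintro ⟨φ, hφ⟩
    have hφv : φ v = ⟨0, hn⟩ := Fin.ext hφ
    rw [hSub, aux_numConnAt_iso T _ φ v, hφv, aux_count_path hn]

theorem stmt9 {V : Type*} [Fintype V] (T : SimpleGraph V) (hT : T.IsTree) (v : V) :
    Fintype.card V ≤ numConnAt T v ∧
      (numConnAt T v = Fintype.card V ↔
        ∃ φ : T ≃g pathGraph (Fintype.card V), (φ v : ℕ) = 0) := by
  exact stmt9_aux T hT v
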